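/- For every ψ in monomial normal form, the translated sequence x_ψ = ⟨π_i(ψ)⟩_{i<ω} is a finitely supported Ignatiev sequence, i.e., x_ψ ∈ H: it satisfies π_{i+1}(ψ) ≤ ℓ(π_i(ψ)) for all i, all entries are < Λ, and some entry is 0. -/

import Mathlib

open Ordinal

noncomputable def e1 (a : Ordinal) : Ordinal := omega0 ^ a - 1

noncomputable def eIter : ℕ → Ordinal → Ordinal
  | 0 => id
  | n + 1 => e1 ∘ eIter n

/-- Ordinal logarithm: exponent of the least term in the Cantor normal form. -/
noncomputable def ell (o : Ordinal) : Ordinal := (Ordinal.CNF omega0 o).getLast?.elim 0 Prod.fst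

/-- Ignatiev (ℓ-)sequences. -/
def IsIgnatiev (x : ℕ → Ordinal) : Prop := ∀ i, x (i + 1) ≤ ell (x i)

/-- The domain of Ignatiev's frame below Λ. -/
def Iset (Λ : Ordinal) : Set (ℕ → Ordinal) := {x | IsIgnatiev x ∧ ∀ i, x i < Λ}

/-- Finitely supported Ignatiev sequences below Λ. -/
def Hset (Λ : Ordinal) : Set (ℕ → Ordinal) := {x | x ∈ Iset Λ ∧ ∃ j, x j = 0}

/-- The accessibility relations. -/
def Rrel (n : ℕ) (x y : ℕ → Ordinal) : Prop :=
  (∀ m ≤ n, y m < x m) ∧ ∀ i, n < i → y i ≤ x i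

/-- Transfinite iterates of the accessibility relation, with witnesses in `D`. -/
noncomputable def Iter (D : Set (ℕ → Ordinal)) (n : ℕ) :
    Ordinal → (ℕ → Ordinal) → (ℕ → Ordinal) → Prop :=
  Ordinal.lt_wf.fix fun α rec x y =>
    if α = 0 then x = y
    else ∀ β, ∀ h : β < α, ∃ z ∈ D, Rrel n x z ∧ rec β h z y

inductive Formula : Type 1 where
  | top : Formula
  | and : Formula → Formula → Formula
  | dia : ℕ → Ordinal → Formula → Formula

def Formula.Bounded (Λ : Ordinal) : Formula → Prop
  | .top => True
  | .and φ ψ => φ.Bounded Λ ∧ ψ.Bounded Λ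
  | .dia _ a φ => a < Λ ∧ φ.Bounded Λ

/-- Forcing over the frame with domain `D`. -/
noncomputable def Forces (D : Set (ℕ → Ordinal)) : (ℕ → Ordinal) → Formula → Prop
  | _, .top => True
  | x, .and φ ψ => Forces D x φ ∧ Forces D x ψ
  | x, .dia n a φ => ∃ y ∈ D, Iter D n a x y ∧ Forces D y φ

/-- Monomial normal forms, coded as lists of (base, exponent) pairs. -/
def MNFc (Λ : Ordinal) (L : List (ℕ × Ordinal)) : Prop :=
  L.Chain' (fun p q => p.1 < q.1) ∧ (∀ p ∈ L, 0 < p.2 ∧ p.2 < Λ) ∧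
    L.Chain' (fun p q => ∃ δ < Λ, p.2 = eIter (q.1 - p.1) q.2 * (2 + δ))

/-- The formula coded by an MNF code. -/
def toFormula : List (ℕ × Ordinal) → Formula
  | [] => .top
  | p :: L => .and (.dia p.1 p.2 .top) (toFormula L)

/-- The projections π of an MNF, i.e. the translated Ignatiev sequence x_ψ. -/
noncomputable def proj : List (ℕ × Ordinal) → ℕ → Ordinal
  | [], _ => 0
  | (n, a) :: L, m => if m ≤ n then eIter (n - m) a else proj L m



section Aux

open Ordinal

lemma e1_eq_of_pos {a : Ordinal} (ha : 0 < a) : e1 a = omega0 ^ a := by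
  unfold e1
  have h : (1 : Ordinal) + omega0 ^ a = omega0 ^ a := by
    apply Ordinal.one_add_of_omega0_le
    calc omega0 = omega0 ^ (1 : Ordinal) := (opow_one _).symm
    _ ≤ omega0 ^ a := opow_le_opow_right omega0_pos (Ordinal.one_le_iff_ne_zero.2 ha.ne')
  calc omega0 ^ a - 1 = (1 + omega0 ^ a) - 1 := by rw [h]
  _ = omega0 ^ a := Ordinal.add_sub_cancel 1 _

lemma e1_pos {a : Ordinal} (ha : 0 < a) : 0 < e1 a := by
  rw [e1_eq_of_pos ha]; exact opow_pos _ omega0_pos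

lemma eIter_pos {a : Ordinal} (ha : 0 < a) : ∀ k, 0 < eIter k a
  | 0 => ha
  | k + 1 => e1_pos (eIter_pos ha k)

lemma e1_lt {Λ a : Ordinal} (heps : omega0 ^ Λ = Λ) (ha : a < Λ) : e1 a < Λ := by
  unfold e1
  calc omega0 ^ a - 1 ≤ omega0 ^ a := Ordinal.sub_le_self _ _
  _ < omega0 ^ Λ := (opow_lt_opow_iff_right one_lt_omega0).2 ha
  _ = Λ := heps

lemma eIter_lt {Λ a : Ordinal} (heps : omega0 ^ Λ = Λ) (ha : a < Λ) :
    ∀ k, eIter k a < Λ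
  | 0 => ha
  | k + 1 => e1_lt heps (eIter_lt heps ha k)

lemma eIter_succ_eq (k : ℕ) {a : Ordinal} (ha : 0 < a) :
    eIter (k + 1) a = omega0 ^ (eIter k a) := by
  show e1 (eIter k a) = _
  exact e1_eq_of_pos (eIter_pos ha k)

lemma ell_ge (α : Ordinal) : ∀ b : Ordinal, omega0 ^ b ∣ α → α ≠ 0 → b ≤ ell α := by
  induction α using Ordinal.induction with
  | h α IH =>
    intro b hdvd hα
    have hb : b ≤ log omega0 α :=
      (opow_le_iff_le_log one_lt_omega0 hα).1 (le_of_dvd hα hdvd)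
    have hrec := Ordinal.CNF.ne_zero (b := omega0) hα
    set r := α % omega0 ^ log omega0 α with hr
    have hsplit : omega0 ^ log omega0 α * (α / omega0 ^ log omega0 α) + r = α :=
      Ordinal.div_add_mod α _
    rcases eq_or_ne r 0 with h0 | h0
    · rw [ell, hrec, h0, Ordinal.CNF.zero_right]
      simpa using hb
    · have hd1 : omega0 ^ b ∣ omega0 ^ log omega0 α * (α / omega0 ^ log omega0 α) :=
        dvd_mul_of_dvd_left (opow_dvd_opow _ hb) _
      have hdr : omega0 ^ b ∣ r := by
        rw [← hsplit] at hdvd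
        exact (Ordinal.dvd_add_iff hd1).1 hdvd
      have hlt : r < α := Ordinal.mod_opow_log_lt_self omega0 hα
      have key : b ≤ ell r := IH r hlt b hdr h0
      obtain ⟨q, rest, hqr⟩ : ∃ q rest, Ordinal.CNF omega0 r = q :: rest :=
        ⟨_, _, Ordinal.CNF.ne_zero h0⟩
      rw [ell, hrec, hqr, List.getLast?_cons_cons]
      rw [ell, hqr] at key
      exact key

lemma MNFc_tail {Λ : Ordinal} {p : ℕ × Ordinal} {L : List (ℕ × Ordinal)}
    (h : MNFc Λ (p :: L)) : MNFc Λ L :=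
  ⟨h.1.tail, fun q hq => h.2.1 q (List.mem_cons_of_mem _ hq), h.2.2.tail⟩

lemma proj_lt {Λ : Ordinal} (hpos : 0 < Λ) (heps : omega0 ^ Λ = Λ)
    {L : List (ℕ × Ordinal)} (hb : ∀ p ∈ L, p.2 < Λ) : ∀ m, proj L m < Λ := by
  induction L with
  | nil => intro m; simpa [proj] using hpos
  | cons p L IH =>
    obtain ⟨n, a⟩ := p
    intro m
    by_cases hm : m ≤ n
    · simpa [proj, hm] using eIter_lt heps (hb (n, a) (List.mem_cons_self)) (n - m)
    · simpa [proj, hm] using IH (fun q hq => hb q (List.mem_cons_of_mem _ hq)) m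

lemma proj_eq_zero (L : List (ℕ × Ordinal)) (m : ℕ) (hm : ∀ p ∈ L, p.1 < m) :
    proj L m = 0 := by
  induction L with
  | nil => rfl
  | cons p L IH =>
    obtain ⟨n, a⟩ := p
    have hn : n < m := hm (n, a) (List.mem_cons_self)
    have : ¬ m ≤ n := by omega
    simp only [proj, this, if_false]
    exact IH fun q hq => hm q (List.mem_cons_of_mem _ hq)

lemma exists_bound (L : List (ℕ × Ordinal)) : ∃ m, ∀ p ∈ L, p.1 < m := by
  induction L with
  | nil => exact ⟨0, by simp⟩
  | cons p L IH =>
    obtain ⟨m, hm⟩ := IH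
    refine ⟨max (p.1 + 1) m, ?_⟩
    intro q hq
    rcases List.mem_cons.1 hq with h | h
    · subst h; omega
    · exact lt_of_lt_of_le (hm q h) (le_max_right _ _)

lemma proj_ign {Λ : Ordinal} {L : List (ℕ × Ordinal)} (hL : MNFc Λ L) :
    IsIgnatiev (proj L) := by
  induction L with
  | nil => intro i; simp [proj, ell, Ordinal.CNF.zero_right]
  | cons p L IH =>
    obtain ⟨n, a⟩ := p
    have hapos : 0 < a := (hL.2.1 (n, a) (List.mem_cons_self)).1
    intro i
    by_cases h1 : i + 1 ≤ n
    · have h2 : i ≤ n := by omega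
      have hni : n - i = (n - (i + 1)) + 1 := by omega
      simp only [proj, h1, h2, if_true, hni]
      set b := eIter (n - (i + 1)) a with hbdef
      have hbpos : 0 < b := eIter_pos hapos _
      rw [eIter_succ_eq _ hapos]
      exact ell_ge _ b dvd_rfl (opow_pos _ omega0_pos).ne'
    · by_cases h2 : i ≤ n
      · have hin : i = n := by omega
        subst hin
        have hn1 : ¬ (i + 1 ≤ i) := by omega
        simp only [proj, h1, h2, if_true, if_false, Nat.sub_self]
        show proj L (i + 1) ≤ ell (eIter 0 a)
        match L, hL with
        | [], _ => exact zero_le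
        | (n', a') :: L', hL =>
          have hlt : i < n' := (List.isChain_cons_cons.1 hL.1).1
          have ha'pos : 0 < a' :=
            (hL.2.1 (n', a') (List.mem_cons_of_mem _ (List.mem_cons_self))).1
          obtain ⟨δ, hδ, heq⟩ := (List.isChain_cons_cons.1 hL.2.2).1
          dsimp only at heq
          have hsub : n' - i = (n' - (i + 1)) + 1 := by omega
          have h3 : i + 1 ≤ n' := by omega
          simp only [proj, h3, if_true]
          set b := eIter (n' - (i + 1)) a' with hbdef
          have hbpos : 0 < b := eIter_pos ha'pos _
          have ha : eIter 0 a = omega0 ^ b * (2 + δ) := by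
            show a = _
            rw [heq, hsub, eIter_succ_eq _ ha'pos]
          rw [ha]
          refine ell_ge _ b (dvd_mul_right _ _) ?_
          refine (mul_pos (opow_pos _ omega0_pos) ?_).ne'
          have : (0:Ordinal) < 2 := by norm_num
          exact lt_of_lt_of_le this le_self_add
      · have h3 : ¬ (i ≤ n) := h2
        simp only [proj, h1, h3, if_false]
        exact IH (MNFc_tail hL) i

end Aux

theorem MNF_to_H (Λ : Ordinal) (hpos : 0 < Λ) (heps : Ordinal.omega0 ^ Λ = Λ)
    (L : List (ℕ × Ordinal)) (hL : MNFc Λ L) : proj L ∈ Hset Λ := by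
  refine ⟨⟨proj_ign hL, fun i => proj_lt hpos heps (fun p hp => (hL.2.1 p hp).2) i⟩, ?_⟩
  obtain ⟨j, hj⟩ := exists_bound L
  exact ⟨j, proj_eq_zero L j hj⟩
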